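/- Boundary limit of the Bellman function: Fix 1 < p < ∞, v ≥ A > 0, and F > 0. For 0 < t ≤ 1 let x(t) = (F, (F (t v)^(p-1))^(1/p), t² A, t v). Then x(t) ∈ D for all t ∈ (0,1], x(t) → (F, 0, 0, 0) as t → 0⁺, and B(x(t)) → 0 as t → 0⁺. -/

import Mathlib

open Filter Topology

/-- The domain `D` of the Bellman function. -/
def bellmanDomain (p : ℝ) : Set (ℝ × ℝ × ℝ × ℝ) :=
  {x | 0 ≤ x.1 ∧ 0 ≤ x.2.1 ∧ 0 < x.2.2.1 ∧ 0 < x.2.2.2 ∧ x.2.2.1 ≤ x.2.2.2 ∧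
    x.2.1 ^ p ≤ x.1 * x.2.2.2 ^ (p - 1)}

/-- The Bellman function `B`. -/
noncomputable def bellmanB (p : ℝ) (x : ℝ × ℝ × ℝ × ℝ) : ℝ :=
  (p / (p - 1)) ^ p * x.1 - (p ^ p / (p - 1)) * x.2.1 ^ p / (x.2.2.1 + (p - 1) * x.2.2.2) ^ (p - 1)

theorem bellman_boundary_limit (p : ℝ) (hp : 1 < p) (F A v : ℝ)
    (hF : 0 < F) (hA : 0 < A) (hAv : A ≤ v) :
    (∀ t ∈ Set.Ioc (0 : ℝ) 1,
        ((F, (F * (t * v) ^ (p - 1)) ^ (1 / p), t ^ 2 * A, t * v) : ℝ × ℝ × ℝ × ℝ) ∈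
          bellmanDomain p) ∧
    Tendsto (fun t : ℝ =>
        ((F, (F * (t * v) ^ (p - 1)) ^ (1 / p), t ^ 2 * A, t * v) : ℝ × ℝ × ℝ × ℝ))
      (𝓝[>] 0) (𝓝 (F, 0, 0, 0)) ∧
    Tendsto (fun t : ℝ =>
        bellmanB p (F, (F * (t * v) ^ (p - 1)) ^ (1 / p), t ^ 2 * A, t * v))
      (𝓝[>] 0) (𝓝 0) := by
  have hp0 : (0:ℝ) < p := lt_trans one_pos hp
  have hp1 : (0:ℝ) < p - 1 := sub_pos.mpr hp
  have hv : (0:ℝ) < v := lt_of_lt_of_le hA hAv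
  refine ⟨?_, ?_, ?_⟩
  · intro t ht
    obtain ⟨ht0, ht1⟩ := ht
    have htv : 0 < t * v := mul_pos ht0 hv
    have hnn : 0 ≤ F * (t * v) ^ (p - 1) :=
      mul_nonneg hF.le (Real.rpow_nonneg htv.le _)
    refine ⟨hF.le, Real.rpow_nonneg hnn _, mul_pos (pow_pos ht0 2) hA, htv, ?_, ?_⟩
    · nlinarith [mul_le_mul_of_nonneg_left hAv ht0.le, mul_pos ht0 hA]
    · rw [one_div, Real.rpow_inv_rpow hnn (ne_of_gt hp0)]
  · have c1 : ContinuousAt (fun t : ℝ => t * v) 0 := by fun_prop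
    have c2 : ContinuousAt (fun t : ℝ => (t * v) ^ (p - 1)) 0 :=
      c1.rpow_const (Or.inr hp1.le)
    have c3 : ContinuousAt (fun t : ℝ => F * (t * v) ^ (p - 1)) 0 :=
      continuousAt_const.mul c2
    have c4 : ContinuousAt (fun t : ℝ => (F * (t * v) ^ (p - 1)) ^ (1 / p)) 0 :=
      c3.rpow_const (Or.inr (by positivity))
    have c5 : ContinuousAt (fun t : ℝ => t ^ 2 * A) 0 := by fun_prop
    have hcont : ContinuousAt (fun t : ℝ =>
        ((F, (F * (t * v) ^ (p - 1)) ^ (1 / p), t ^ 2 * A, t * v) : ℝ × ℝ × ℝ × ℝ)) 0 :=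
      continuousAt_const.prodMk (c4.prodMk (c5.prodMk c1))
    have := hcont.tendsto.mono_left (nhdsWithin_le_nhds (s := Set.Ioi (0:ℝ)))
    simpa [Real.zero_rpow (ne_of_gt hp1), Real.zero_rpow (inv_ne_zero (ne_of_gt hp0))] using this
  · set g : ℝ → ℝ := fun t => (p / (p - 1)) ^ p * F -
      (p ^ p / (p - 1)) * (F * v ^ (p - 1)) / (t * A + (p - 1) * v) ^ (p - 1) with hgdef
    have hden : (0:ℝ) < (p - 1) * v := mul_pos hp1 hv
    have hg : Tendsto g (𝓝[>] (0:ℝ)) (𝓝 0) := by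
      have cb : ContinuousAt (fun t : ℝ => (t * A + (p - 1) * v) ^ (p - 1)) 0 :=
        (by fun_prop : ContinuousAt (fun t : ℝ => t * A + (p - 1) * v) 0).rpow_const
          (Or.inr hp1.le)
      have cg : ContinuousAt g 0 := by
        apply ContinuousAt.sub continuousAt_const
        exact continuousAt_const.div cb (by
          simp only [zero_mul, zero_add]
          exact ne_of_gt (Real.rpow_pos_of_pos hden _))
      have hval : g 0 = 0 := by
        have h1 : ((p - 1) * v) ^ (p - 1) = (p - 1) ^ (p - 1) * v ^ (p - 1) :=
          Real.mul_rpow hp1.le hv.le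
        have h2 : (p / (p - 1)) ^ p = p ^ p / (p - 1) ^ p :=
          Real.div_rpow hp0.le hp1.le _
        have h3 : (p - 1) ^ p = (p - 1) * (p - 1) ^ (p - 1) := by
          have h := Real.rpow_add hp1 1 (p - 1)
          rw [Real.rpow_one] at h
          rw [← h]
          congr 1
          ring
        have hv1 : (0:ℝ) < v ^ (p - 1) := Real.rpow_pos_of_pos hv _
        have hq1 : (0:ℝ) < (p - 1) ^ (p - 1) := Real.rpow_pos_of_pos hp1 _
        simp only [hgdef, zero_mul, zero_add, h1, h2]
        field_simp
        rw [h3]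
        ring
      have h := cg.tendsto.mono_left (nhdsWithin_le_nhds (s := Set.Ioi (0:ℝ)))
      rwa [hval] at h
    have heq : ∀ᶠ t in 𝓝[>] (0:ℝ),
        g t = bellmanB p (F, (F * (t * v) ^ (p - 1)) ^ (1 / p), t ^ 2 * A, t * v) := by
      filter_upwards [self_mem_nhdsWithin] with t ht
      have ht0 : (0:ℝ) < t := ht
      have htv : 0 < t * v := mul_pos ht0 hv
      have hnn : 0 ≤ F * (t * v) ^ (p - 1) :=
        mul_nonneg hF.le (Real.rpow_nonneg htv.le _)
      have hb : (0:ℝ) < t * A + (p - 1) * v := by positivity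
      have htp : (0:ℝ) < t ^ (p - 1) := Real.rpow_pos_of_pos ht0 _
      have hbp : (0:ℝ) < (t * A + (p - 1) * v) ^ (p - 1) := Real.rpow_pos_of_pos hb _
      simp only [bellmanB, hgdef]
      rw [one_div, Real.rpow_inv_rpow hnn (ne_of_gt hp0)]
      rw [show t ^ 2 * A + (p - 1) * (t * v) = t * (t * A + (p - 1) * v) by ring]
      rw [Real.mul_rpow ht0.le hb.le, Real.mul_rpow ht0.le hv.le]
      field_simp
    exact hg.congr' heq
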